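/- For all a, b > 0 and ν ∈ [0,1]: exp((1/2)·ν·(1−ν)·(1 − min(a,b)/max(a,b))²) ≤ ((1−ν)·a + ν·b)/(a^(1−ν)·b^ν) ≤ exp((1/2)·ν·(1−ν)·(max(a,b)/min(a,b) − 1)²). -/

import Mathlib

open Real Set Filter

noncomputable def Ff (a b c : ℝ) (x : ℝ) : ℝ :=
  Real.log (a + x*(b-a)) + x * (Real.log a - Real.log b) - Real.log a - c/2*(x - x^2)

noncomputable def Ff' (a b c : ℝ) (x : ℝ) : ℝ :=
  (b-a)/(a + x*(b-a)) + (Real.log a - Real.log b) - c/2*(1 - 2*x)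

lemma hasDerivAt_Ff (a b c x : ℝ) (hx : 0 < a + x*(b-a)) :
    HasDerivAt (Ff a b c) (Ff' a b c x) x := by
  have hg : HasDerivAt (fun y : ℝ => a + y*(b-a)) (b-a) x := by
    simpa using ((hasDerivAt_id x).mul_const (b-a)).const_add a
  have h1 : HasDerivAt (fun y : ℝ => Real.log (a + y*(b-a))) ((b-a)/(a + x*(b-a))) x := by
    simpa [div_eq_mul_inv, mul_comm] using hg.log hx.ne'
  have h2 : HasDerivAt (fun y : ℝ => y * (Real.log a - Real.log b)) (Real.log a - Real.log b) x := by
    simpa using (hasDerivAt_id x).mul_const _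
  have h3 : HasDerivAt (fun y : ℝ => c/2*(y - y^2)) (c/2*(1 - 2*x)) x := by
    have : HasDerivAt (fun y : ℝ => y - y^2) (1 - 2*x) x := by
      simpa using (hasDerivAt_id x).fun_sub (hasDerivAt_pow 2 x)
    simpa using this.const_mul (c/2)
  exact ((h1.add h2).sub_const (Real.log a)).fun_sub h3

lemma hasDerivAt_Ff' (a b c x : ℝ) (hx : 0 < a + x*(b-a)) :
    HasDerivAt (Ff' a b c) (-(b-a)^2/(a + x*(b-a))^2 + c) x := by
  have hg : HasDerivAt (fun y : ℝ => a + y*(b-a)) (b-a) x := by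
    simpa using ((hasDerivAt_id x).mul_const (b-a)).const_add a
  have h1 : HasDerivAt (fun y : ℝ => (b-a)/(a + y*(b-a)))
      (-(b-a)^2/(a + x*(b-a))^2) x := by
    have := (hasDerivAt_const x (b-a)).fun_div hg hx.ne'
    refine this.congr_deriv ?_
    field_simp
    ring
  have h3 : HasDerivAt (fun y : ℝ => c/2*(1 - 2*y)) (-c) x := by
    have : HasDerivAt (fun y : ℝ => (1:ℝ) - 2*y) (-2) x := by
      simpa using ((hasDerivAt_id x).const_mul (2:ℝ)).const_sub 1
    refine (this.const_mul (c/2)).congr_deriv ?_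
    ring
  have := (h1.add_const (Real.log a - Real.log b)).fun_sub h3
  exact this.congr_deriv (sub_neg_eq_add _ _)

lemma gpos (a b : ℝ) (ha : 0 < a) (hb : 0 < b) {x : ℝ} (hx : x ∈ Set.Icc (0:ℝ) 1) :
    0 < a + x*(b-a) := by
  rcases le_total a b with h | h
  · nlinarith [hx.1]
  · nlinarith [hx.2]

section main
variable {a b c : ℝ}

lemma deriv_Ff_eqOn (x : ℝ) (hx : 0 < a + x*(b-a)) :
    deriv (Ff a b c) x = Ff' a b c x := (hasDerivAt_Ff a b c x hx).deriv

lemma deriv2_Ff (ha : 0 < a) (hb : 0 < b) (x : ℝ) (hx : x ∈ Set.Ioo (0:ℝ) 1) :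
    DifferentiableAt ℝ (deriv (Ff a b c)) x ∧
    deriv (deriv (Ff a b c)) x = -(b-a)^2/(a + x*(b-a))^2 + c := by
  have hU : IsOpen {y : ℝ | 0 < a + y*(b-a)} :=
    isOpen_lt continuous_const (by continuity)
  have hxU : x ∈ {y : ℝ | 0 < a + y*(b-a)} := gpos a b ha hb (Set.mem_Icc.2 ⟨hx.1.le, hx.2.le⟩)
  have hev : deriv (Ff a b c) =ᶠ[nhds x] Ff' a b c :=
    Filter.eventually_of_mem (hU.mem_nhds hxU) (fun y hy => (hasDerivAt_Ff a b c y hy).deriv)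
  constructor
  · exact hev.differentiableAt_iff.2 (hasDerivAt_Ff' a b c x hxU).differentiableAt
  · rw [hev.deriv_eq]
    exact (hasDerivAt_Ff' a b c x hxU).deriv

lemma concave_Ff (ha : 0 < a) (hb : 0 < b) (hc : ∀ x ∈ Set.Icc (0:ℝ) 1, c * (a + x*(b-a))^2 ≤ (b-a)^2) :
    ConcaveOn ℝ (Set.Icc (0:ℝ) 1) (Ff a b c) := by
  apply concaveOn_of_deriv2_nonpos (convex_Icc 0 1)
  · exact fun x hx => (hasDerivAt_Ff a b c x (gpos a b ha hb hx)).continuousAt.continuousWithinAt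
  · rw [interior_Icc]
    exact fun x hx => (hasDerivAt_Ff a b c x
      (gpos a b ha hb (Set.mem_Icc.2 ⟨hx.1.le, hx.2.le⟩))).differentiableAt.differentiableWithinAt
  · rw [interior_Icc]
    exact fun x hx => ((deriv2_Ff ha hb x hx).1).differentiableWithinAt
  · rw [interior_Icc]
    intro x hx
    have h2 := (deriv2_Ff (c := c) ha hb x hx).2
    have hg := gpos a b ha hb (Set.mem_Icc.2 ⟨hx.1.le, hx.2.le⟩)
    have hg2 : (0:ℝ) < (a + x*(b-a))^2 := by positivity
    have := (le_div_iff₀ hg2).2 (hc x ⟨hx.1.le, hx.2.le⟩)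
    show deriv^[2] (Ff a b c) x ≤ 0
    simp only [Function.iterate_succ, Function.iterate_zero, Function.comp_apply, id_eq]
    rw [h2]
    have : c ≤ (b-a)^2/(a + x*(b-a))^2 := this
    linarith [this, neg_div ((a + x*(b-a))^2) ((b-a)^2)]

lemma convex_Ff (ha : 0 < a) (hb : 0 < b) (hc : ∀ x ∈ Set.Icc (0:ℝ) 1, (b-a)^2 ≤ c * (a + x*(b-a))^2) :
    ConvexOn ℝ (Set.Icc (0:ℝ) 1) (Ff a b c) := by
  apply convexOn_of_deriv2_nonneg (convex_Icc 0 1)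
  · exact fun x hx => (hasDerivAt_Ff a b c x (gpos a b ha hb hx)).continuousAt.continuousWithinAt
  · rw [interior_Icc]
    exact fun x hx => (hasDerivAt_Ff a b c x
      (gpos a b ha hb (Set.mem_Icc.2 ⟨hx.1.le, hx.2.le⟩))).differentiableAt.differentiableWithinAt
  · rw [interior_Icc]
    exact fun x hx => ((deriv2_Ff ha hb x hx).1).differentiableWithinAt
  · rw [interior_Icc]
    intro x hx
    have h2 := (deriv2_Ff (c := c) ha hb x hx).2
    have hg := gpos a b ha hb (Set.mem_Icc.2 ⟨hx.1.le, hx.2.le⟩)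
    have hg2 : (0:ℝ) < (a + x*(b-a))^2 := by positivity
    have := (div_le_iff₀ hg2).2 (hc x ⟨hx.1.le, hx.2.le⟩)
    show 0 ≤ deriv^[2] (Ff a b c) x
    simp only [Function.iterate_succ, Function.iterate_zero, Function.comp_apply, id_eq]
    rw [h2]
    linarith [this, neg_div ((a + x*(b-a))^2) ((b-a)^2)]

lemma Ff_zero : Ff a b c 0 = 0 := by simp [Ff]

lemma Ff_one : Ff a b c 1 = 0 := by
  have h : a + 1*(b-a) = b := by ring
  rw [Ff, h]; ring

end main

theorem stmt_8 (a b : ℝ) (ha : 0 < a) (hb : 0 < b) (ν : ℝ) (hν : ν ∈ Set.Icc (0:ℝ) 1) :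
    Real.exp (1/2 * ν * (1 - ν) * (1 - min a b / max a b)^2)
      ≤ ((1 - ν) * a + ν * b) / (a ^ (1 - ν) * b ^ ν) ∧
    ((1 - ν) * a + ν * b) / (a ^ (1 - ν) * b ^ ν)
      ≤ Real.exp (1/2 * ν * (1 - ν) * (max a b / min a b - 1)^2) := by
  obtain ⟨hν0, hν1⟩ := hν
  set m := min a b with hm
  set M := max a b with hM
  have hmpos : 0 < m := lt_min ha hb
  have hMpos : 0 < M := lt_of_lt_of_le hmpos (min_le_max)
  have habs : (M - m)^2 = (b - a)^2 := by
    rw [hM, hm, max_sub_min_eq_abs, sq_abs]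
  have hgν : 0 < a + ν*(b-a) := gpos a b ha hb ⟨hν0, hν1⟩
  have hnum : (1-ν)*a + ν*b = a + ν*(b-a) := by ring
  have hden : a ^ (1-ν) * b ^ ν = Real.exp ((1-ν)*Real.log a + ν*Real.log b) := by
    rw [Real.rpow_def_of_pos ha, Real.rpow_def_of_pos hb, ← Real.exp_add]
    ring_nf
  have hratio : ((1-ν)*a + ν*b) / (a^(1-ν)*b^ν)
      = Real.exp (Real.log (a + ν*(b-a)) - ((1-ν)*Real.log a + ν*Real.log b)) := by
    rw [hnum, hden, Real.exp_sub, Real.exp_log hgν]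
  have hmem0 : (0:ℝ) ∈ Set.Icc (0:ℝ) 1 := ⟨le_refl 0, zero_le_one⟩
  have hmem1 : (1:ℝ) ∈ Set.Icc (0:ℝ) 1 := ⟨zero_le_one, le_refl 1⟩
  constructor
  · -- lower bound
    set c := (1 - m/M)^2 with hc
    have hcM : c * M^2 = (b-a)^2 := by
      rw [hc, ← habs]
      field_simp
    have hcond : ∀ x ∈ Set.Icc (0:ℝ) 1, c * (a + x*(b-a))^2 ≤ (b-a)^2 := by
      intro x hx
      have hgM : a + x*(b-a) ≤ M := by
        rcases le_total a b with h | h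
        · have : a + x*(b-a) ≤ b := by nlinarith [hx.2]
          exact this.trans (le_max_right a b)
        · have : a + x*(b-a) ≤ a := by nlinarith [hx.1]
          exact this.trans (le_max_left a b)
      have hg := gpos a b ha hb hx
      have hsq : (a + x*(b-a))^2 ≤ M^2 := by nlinarith
      calc c * (a + x*(b-a))^2 ≤ c * M^2 :=
            mul_le_mul_of_nonneg_left hsq (sq_nonneg _)
        _ = (b-a)^2 := hcM
    have hcon := concave_Ff ha hb hcond
    have := hcon.2 hmem0 hmem1 (by linarith : (0:ℝ) ≤ 1-ν) hν0 (by ring)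
    simp only [smul_eq_mul, mul_zero, mul_one, zero_add, Ff_zero, Ff_one] at this
    rw [hratio]
    apply Real.exp_le_exp.2
    simp only [Ff] at this
    linarith [this]
  · -- upper bound
    set c := (M/m - 1)^2 with hc
    have hcm : c * m^2 = (b-a)^2 := by
      rw [hc, ← habs]
      field_simp
    have hcond : ∀ x ∈ Set.Icc (0:ℝ) 1, (b-a)^2 ≤ c * (a + x*(b-a))^2 := by
      intro x hx
      have hgm : m ≤ a + x*(b-a) := by
        rcases le_total a b with h | h
        · have : a ≤ a + x*(b-a) := by nlinarith [hx.1]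
          exact (min_le_left a b).trans this
        · have : b ≤ a + x*(b-a) := by nlinarith [hx.2]
          exact (min_le_right a b).trans this
      have hsq : m^2 ≤ (a + x*(b-a))^2 := by nlinarith
      calc (b-a)^2 = c * m^2 := hcm.symm
        _ ≤ c * (a + x*(b-a))^2 := mul_le_mul_of_nonneg_left hsq (sq_nonneg _)
    have hcon := convex_Ff ha hb hcond
    have := hcon.2 hmem0 hmem1 (by linarith : (0:ℝ) ≤ 1-ν) hν0 (by ring)
    simp only [smul_eq_mul, mul_zero, mul_one, zero_add, Ff_zero, Ff_one] at this
    rw [hratio]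
    apply Real.exp_le_exp.2
    simp only [Ff] at this
    linarith [this]
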